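/- For all nonnegative integers m, n and real x > 0, Bel_{n+m,λ}(x) = ∑_{k=0}^{n} ∑_{j=0}^{m} C(n,k) · S_{2,λ}(m,j) · Bel_{k,λ}(x) · ((j − mλ)_{n−k,λ}) · x^j, where (j − mλ)_{n−k,λ} is the degenerate falling factorial of j − mλ. -/

import Mathlib

open Finset

/-- Degenerate falling factorial `(y)_{r,λ}`. -/
noncomputable def degFall (lam x : ℝ) (n : ℕ) : ℝ := ∏ i ∈ Finset.range n, (x - i * lam)

/-- Ordinary falling factorial `(x)_k`. -/
noncomputable def fall (x : ℝ) (k : ℕ) : ℝ := ∏ i ∈ Finset.range k, (x - i)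

open Nat


lemma fall_add (y : ℝ) (j r : ℕ) : fall y (j + r) = fall y j * fall (y - j) r := by
  unfold fall
  rw [Finset.prod_range_add]
  congr 1
  refine Finset.prod_congr rfl fun i _ => ?_
  push_cast; ring

lemma degFall_add_nat (lam y : ℝ) (m n : ℕ) :
    degFall lam y (m + n) = degFall lam y m * degFall lam (y - m * lam) n := by
  unfold degFall
  rw [Finset.prod_range_add]
  congr 1
  refine Finset.prod_congr rfl fun i _ => ?_
  push_cast; ring


lemma degFall_succ (lam y : ℝ) (n : ℕ) :
    degFall lam y (n + 1) = degFall lam y n * (y - n * lam) := by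
  unfold degFall; rw [Finset.prod_range_succ]

lemma degFall_zero (lam y : ℝ) : degFall lam y 0 = 1 := by simp [degFall]

lemma degFall_vandermonde (lam a b : ℝ) (n : ℕ) :
    degFall lam (a + b) n =
      ∑ k ∈ range (n + 1), (n.choose k : ℝ) * degFall lam a k * degFall lam b (n - k) := by
  induction n with
  | zero => simp [degFall]
  | succ n ih =>
    rw [degFall_succ, ih, Finset.sum_mul]
    have key : ∀ k ∈ range (n + 1),
        (n.choose k : ℝ) * degFall lam a k * degFall lam b (n - k) * (a + b - n * lam)
        = (n.choose k : ℝ) * (degFall lam a (k + 1) * degFall lam b (n - k))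
          + (n.choose k : ℝ) * (degFall lam a k * degFall lam b (n - k + 1)) := by
      intro k hk
      rw [Finset.mem_range] at hk
      have hkn : k ≤ n := Nat.lt_succ_iff.mp hk
      have h3 : ((n - k : ℕ) : ℝ) = (n : ℝ) - k := by push_cast [Nat.cast_sub hkn]; ring
      rw [degFall_succ lam a k, degFall_succ lam b (n - k), h3]; ring
    rw [Finset.sum_congr rfl key, Finset.sum_add_distrib]
    have e2 : ∑ k ∈ range (n + 1), (n.choose k : ℝ) * (degFall lam a k * degFall lam b (n - k + 1))
        = ∑ k ∈ range (n + 2), ((n.choose k : ℝ)) * (degFall lam a k * degFall lam b (n + 1 - k)) := by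
      rw [Finset.sum_range_succ (fun k => ((n.choose k : ℝ)) * (degFall lam a k * degFall lam b (n + 1 - k))) (n + 1)]
      rw [Nat.choose_succ_self]
      simp only [Nat.cast_zero, zero_mul, add_zero]
      refine Finset.sum_congr rfl fun k hk => ?_
      rw [Finset.mem_range] at hk
      have hnk : n - k + 1 = n + 1 - k := by omega
      rw [hnk]
    rw [e2]
    rw [Finset.sum_range_succ' (fun k => ((n + 1).choose k : ℝ) * degFall lam a k * degFall lam b (n + 1 - k)) (n + 1)]
    rw [Finset.sum_range_succ' (fun k => ((n.choose k : ℝ)) * (degFall lam a k * degFall lam b (n + 1 - k))) (n + 1)]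
    simp only [Nat.succ_sub_succ, Nat.choose_zero_right, Nat.cast_one, Nat.sub_zero, degFall_zero]
    have pascal : ∀ k ∈ range (n + 1),
        (((n + 1).choose (k + 1) : ℝ)) * degFall lam a (k + 1) * degFall lam b (n - k)
        = ((n.choose (k + 1) : ℝ)) * (degFall lam a (k + 1) * degFall lam b (n - k))
          + ((n.choose k : ℝ)) * (degFall lam a (k + 1) * degFall lam b (n - k)) := by
      intro k hk
      rw [Nat.choose_succ_succ']
      push_cast; ring
    rw [Finset.sum_congr rfl pascal, Finset.sum_add_distrib]
    ring

lemma fall_nat_eq_zero {i k : ℕ} (h : i < k) : fall (i : ℝ) k = 0 := by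
  apply Finset.prod_eq_zero (Finset.mem_range.mpr h)
  simp

lemma fall_succ' (y : ℝ) (k : ℕ) : fall y (k + 1) = y * fall (y - 1) k := by
  unfold fall
  rw [Finset.prod_range_succ']
  have h0 : y - ((0 : ℕ) : ℝ) = y := by simp
  rw [h0, mul_comm]
  congr 1
  refine Finset.prod_congr rfl fun i _ => ?_
  push_cast; ring

lemma fact_mul_fall (t k : ℕ) : (t ! : ℝ) * fall ((t + k : ℕ) : ℝ) k = ((t + k)! : ℝ) := by
  induction k with
  | zero => simp [fall]
  | succ k ih =>
    have : ((t + (k + 1) : ℕ) : ℝ) = ((t + k : ℕ) : ℝ) + 1 := by push_cast; ring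
    rw [this, fall_succ']
    have h2 : ((t + k : ℕ) : ℝ) + 1 - 1 = ((t + k : ℕ) : ℝ) := by ring
    rw [h2]
    have : t + (k + 1) = (t + k) + 1 := by omega
    rw [this, Nat.factorial_succ]
    push_cast at ih ⊢
    linear_combination ((t : ℝ) + k + 1) * ih

lemma summable_fall (x : ℝ) (k : ℕ) :
    Summable (fun i : ℕ => fall (i : ℝ) k * x ^ i / i !) := by
  have hinj : Function.Injective (fun t : ℕ => t + k) := fun a b h => by simpa using h
  have hvan : ∀ i ∉ Set.range (fun t : ℕ => t + k),
      fall (i : ℝ) k * x ^ i / i ! = 0 := by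
    intro i hi
    have : i < k := by
      by_contra h
      exact hi ⟨i - k, show i - k + k = i by omega⟩
    rw [fall_nat_eq_zero this, zero_mul, zero_div]
  rw [← hinj.summable_iff hvan]
  have heq : (fun i : ℕ => fall (i : ℝ) k * x ^ i / i !) ∘ (fun t : ℕ => t + k)
      = fun t : ℕ => x ^ k * (x ^ t / t !) := by
    funext t
    simp only [Function.comp_apply]
    have hf : fall ((t + k : ℕ) : ℝ) k = ((t + k)! : ℝ) / t ! := by
      rw [← fact_mul_fall t k]
      field_simp
    rw [hf, pow_add]
    have h1 : ((t + k)! : ℝ) ≠ 0 := Nat.cast_ne_zero.mpr (Nat.factorial_ne_zero _)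
    have h2 : (t ! : ℝ) ≠ 0 := Nat.cast_ne_zero.mpr (Nat.factorial_ne_zero _)
    field_simp
  rw [heq]
  exact (Real.summable_pow_div_factorial x).mul_left _

lemma tsum_fall (x : ℝ) (k : ℕ) :
    ∑' i : ℕ, fall (i : ℝ) k * x ^ i / i ! = x ^ k * ∑' t : ℕ, x ^ t / t ! := by
  have hinj : Function.Injective (fun t : ℕ => t + k) := fun a b h => by simpa using h
  have hsupp : Function.support (fun i : ℕ => fall (i : ℝ) k * x ^ i / i !)
      ⊆ Set.range (fun t : ℕ => t + k) := by
    intro i hi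
    by_contra h
    have hik : i < k := by
      by_contra h2
      exact h ⟨i - k, show i - k + k = i by omega⟩
    exact hi (show fall (i : ℝ) k * x ^ i / i ! = 0 by
      rw [fall_nat_eq_zero hik, zero_mul, zero_div])
  rw [← hinj.tsum_eq hsupp]
  have heq : ∀ t : ℕ, fall (((fun t : ℕ => t + k) t : ℕ) : ℝ) k * x ^ ((fun t : ℕ => t + k) t) / ((fun t : ℕ => t + k) t)!
      = x ^ k * (x ^ t / t !) := by
    intro t
    show fall ((t + k : ℕ) : ℝ) k * x ^ (t + k) / (t + k)! = x ^ k * (x ^ t / t !)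
    have hf : fall ((t + k : ℕ) : ℝ) k = ((t + k)! : ℝ) / t ! := by
      rw [← fact_mul_fall t k]
      field_simp
    rw [hf, pow_add]
    have h1 : ((t + k)! : ℝ) ≠ 0 := Nat.cast_ne_zero.mpr (Nat.factorial_ne_zero _)
    have h2 : (t ! : ℝ) ≠ 0 := Nat.cast_ne_zero.mpr (Nat.factorial_ne_zero _)
    field_simp
  rw [tsum_congr heq, tsum_mul_left]
lemma tsum_finsum {ι : Type*} (x : ℝ) (s : Finset ι) (c : ι → ℝ) (d : ι → ℕ) :
    ∑' i : ℕ, (∑ a ∈ s, c a * fall (i : ℝ) (d a)) * x ^ i / i !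
      = ∑ a ∈ s, c a * (x ^ (d a) * ∑' t : ℕ, x ^ t / t !) := by
  have h1 : ∀ i : ℕ, (∑ a ∈ s, c a * fall (i : ℝ) (d a)) * x ^ i / i !
      = ∑ a ∈ s, c a * (fall (i : ℝ) (d a) * x ^ i / i !) := by
    intro i
    rw [Finset.sum_mul, Finset.sum_div]
    refine Finset.sum_congr rfl fun a _ => ?_
    ring
  rw [tsum_congr h1, Summable.tsum_finsetSum (fun a _ => ((summable_fall x (d a)).mul_left (c a)))]
  refine Finset.sum_congr rfl fun a _ => ?_
  rw [tsum_mul_left, tsum_fall]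

lemma hstar_aux (lam : ℝ) (S2 : ℕ → ℕ → ℝ)
    (hS2 : ∀ (n : ℕ) (x : ℝ), degFall lam x n = ∑ k ∈ range (n + 1), S2 n k * fall x k)
    (m n : ℕ) (y : ℝ) :
    degFall lam y (n + m) =
      ∑ j ∈ range (m + 1), ∑ k ∈ range (n + 1), ∑ r ∈ range (k + 1),
        ((n.choose k : ℝ) * S2 m j * S2 k r * degFall lam ((j : ℝ) - m * lam) (n - k))
          * fall y (j + r) := by
  rw [add_comm n m, degFall_add_nat, hS2 m y, Finset.sum_mul]
  refine Finset.sum_congr rfl fun j _ => ?_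
  have hy : y - m * lam = (y - j) + ((j : ℝ) - m * lam) := by ring
  rw [hy, degFall_vandermonde, Finset.mul_sum]
  refine Finset.sum_congr rfl fun k _ => ?_
  rw [hS2 k (y - j), Finset.mul_sum, Finset.sum_mul, Finset.mul_sum]
  refine Finset.sum_congr rfl fun r _ => ?_
  rw [fall_add y j r]
  ring


/-- with `Bel_{n,λ}(x) = ∑_{k=0}^n S_{2,λ}(n,k) x^k`,
`Bel_{n+m,λ}(x) = ∑_{k=0}^n ∑_{j=0}^m C(n,k) S_{2,λ}(m,j) Bel_{k,λ}(x) (j−mλ)_{n−k,λ} x^j`. -/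
theorem degenerate_bell_add_index (lam : ℝ) (S2 : ℕ → ℕ → ℝ)
    (hS2 : ∀ (n : ℕ) (x : ℝ), degFall lam x n = ∑ k ∈ range (n + 1), S2 n k * fall x k)
    (m n : ℕ) (x : ℝ) (hx : 0 < x) :
    ∑ k ∈ range (n + m + 1), S2 (n + m) k * x ^ k =
      ∑ k ∈ range (n + 1), ∑ j ∈ range (m + 1),
        (n.choose k : ℝ) * S2 m j * (∑ i ∈ range (k + 1), S2 k i * x ^ i) *
          degFall lam ((j : ℝ) - m * lam) (n - k) * x ^ j := by
  set E : ℝ := ∑' t : ℕ, x ^ t / t ! with hEdef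
  have hsum := Real.summable_pow_div_factorial x
  have hE1 : (1 : ℝ) ≤ E := by
    have h0 : x ^ 0 / (0 : ℕ)! = 1 := by norm_num
    calc (1 : ℝ) = x ^ 0 / (0 : ℕ)! := h0.symm
    _ ≤ E := Summable.le_tsum hsum 0 (fun j _ => by positivity)
  have hEne : E ≠ 0 := by linarith
  set T : ℝ := ∑' i : ℕ, degFall lam (i : ℝ) (n + m) * x ^ i / i ! with hTdef
  -- Way 1
  have way1 : (∑ k ∈ range (n + m + 1), S2 (n + m) k * x ^ k) * E = T := by
    have h1 : T = ∑ a ∈ range (n + m + 1), S2 (n + m) a * (x ^ a * E) := by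
      rw [hTdef, ← tsum_finsum x (range (n + m + 1)) (S2 (n + m)) (fun a => a)]
      exact tsum_congr fun i => by rw [hS2 (n + m) (i : ℝ)]
    rw [h1, Finset.sum_mul]
    exact Finset.sum_congr rfl fun a _ => by ring
  -- Way 2
  have way2 : (∑ k ∈ range (n + 1), ∑ j ∈ range (m + 1),
        (n.choose k : ℝ) * S2 m j * (∑ i ∈ range (k + 1), S2 k i * x ^ i) *
          degFall lam ((j : ℝ) - m * lam) (n - k) * x ^ j) * E = T := by
    set s2fin : Finset ((_ : ℕ × ℕ) × ℕ) :=
      (range (m + 1) ×ˢ range (n + 1)).sigma (fun p => range (p.2 + 1)) with hs2fin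
    set c : ((_ : ℕ × ℕ) × ℕ) → ℝ := fun q =>
      (n.choose q.1.2 : ℝ) * S2 m q.1.1 * S2 q.1.2 q.2 *
        degFall lam ((q.1.1 : ℝ) - m * lam) (n - q.1.2) with hc
    set d : ((_ : ℕ × ℕ) × ℕ) → ℕ := fun q => q.1.1 + q.2 with hd
    have h1 : T = ∑ q ∈ s2fin, c q * (x ^ (d q) * E) := by
      rw [hTdef, ← tsum_finsum x s2fin c d]
      refine tsum_congr fun i => ?_
      congr 2
      rw [hs2fin, Finset.sum_sigma, Finset.sum_product]
      exact hstar_aux lam S2 hS2 m n (i : ℝ)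
    rw [h1, hs2fin, Finset.sum_sigma, Finset.sum_product]
    rw [Finset.sum_mul]
    conv_rhs => rw [Finset.sum_comm]
    refine Finset.sum_congr rfl fun k hk => ?_
    rw [Finset.sum_mul]
    refine Finset.sum_congr rfl fun j hj => ?_
    simp only [hc, hd]
    have key : ∀ r ∈ range (k + 1),
        (n.choose k : ℝ) * S2 m j * S2 k r * degFall lam ((j : ℝ) - m * lam) (n - k)
            * (x ^ (j + r) * E)
        = ((n.choose k : ℝ) * S2 m j * degFall lam ((j : ℝ) - m * lam) (n - k) * x ^ j * E)
            * (S2 k r * x ^ r) := by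
      intro r hr
      rw [pow_add]
      ring
    rw [Finset.sum_congr rfl key, ← Finset.mul_sum]
    ring
  rw [← way1] at way2
  exact (mul_right_cancel₀ hEne way2).symm
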